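/- In a path graph (repeater line) on vertices v_1, v_2, ..., v_n with edges exactly {v_i, v_{i+1}}, after performing local complementations sequentially at v_2, v_3, ..., v_i (in that order), the neighborhood of v_{i+1} in the resulting graph is {v_1, ..., v_i, v_{i+2}} (omitting v_{i+2} if i+1 = n). -/

import Mathlib

variable {V : Type*}

/-- Local complementation at vertex `v`. -/
def lc (G : SimpleGraph V) (v : V) : SimpleGraph V where
  Adj a b := a ≠ b ∧ (((G.Adj v a ∧ G.Adj v b) ∧ ¬ G.Adj a b) ∨ (¬(G.Adj v a ∧ G.Adj v b) ∧ G.Adj a b))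
  symm := by
    constructor
    rintro a b ⟨hne, h⟩
    refine ⟨hne.symm, ?_⟩
    rcases h with ⟨⟨h1, h2⟩, h3⟩ | ⟨h1, h2⟩
    · exact Or.inl ⟨⟨h2, h1⟩, fun hb => h3 hb.symm⟩
    · exact Or.inr ⟨fun hb => h1 ⟨hb.2, hb.1⟩, h2.symm⟩
  loopless := by constructor; rintro a ⟨hne, -⟩; exact hne rfl

/-- Vertex deletion: remove `v` and all incident edges (leaving `v` isolated). -/
def del (G : SimpleGraph V) (v : V) : SimpleGraph V where
  Adj a b := G.Adj a b ∧ a ≠ v ∧ b ≠ v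
  symm := by constructor; rintro a b ⟨h, ha, hb⟩; exact ⟨h.symm, hb, ha⟩
  loopless := by constructor; rintro a ⟨h, -⟩; exact G.loopless.irrefl a h

def seqLC (G : SimpleGraph V) (l : List V) : SimpleGraph V := l.foldl lc G

/-- Path graph on vertices 1,...,n inside ℕ. -/
def pathN (n : ℕ) : SimpleGraph ℕ :=
  SimpleGraph.fromRel (fun a b => 1 ≤ a ∧ a + 1 = b ∧ b ≤ n)

def Xmeas (G : SimpleGraph V) (v w : V) : SimpleGraph V :=
  lc (del (lc (lc G w) v) v) w

def induceOn (G : SimpleGraph V) (S : Set V) : SimpleGraph V where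
  Adj a b := G.Adj a b ∧ a ∈ S ∧ b ∈ S
  symm := by constructor; rintro a b ⟨h, ha, hb⟩; exact ⟨h.symm, hb, ha⟩
  loopless := by constructor; rintro a ⟨h, -⟩; exact G.loopless.irrefl a h

def starG (c : V) : SimpleGraph V where
  Adj a b := a ≠ b ∧ (a = c ∨ b = c)
  symm := by constructor; rintro a b ⟨hne, h⟩; exact ⟨hne.symm, h.symm⟩
  loopless := by constructor; rintro a ⟨hne, -⟩; exact hne rfl

def gridGraph : SimpleGraph (ℤ × ℤ) where
  Adj u v := (u.1 - v.1).natAbs + (u.2 - v.2).natAbs = 1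
  symm := by
    constructor
    intro u v h
    omega
  loopless := by constructor; intro u h; simp at h

/-- in the path graph on vertices 1,...,n, after local complementations
at v₂,...,v_i (in order), the neighborhood of v_{i+1} is {v₁,...,v_i, v_{i+2}}
(omitting v_{i+2} when i+1 = n). -/

def GkP (n k a b : ℕ) : Prop :=
  1 ≤ a ∧ a < b ∧ b ≤ n ∧
    (b = k ∨ b = k + 1 ∨ (b < k ∧ (b + k) % 2 = 0) ∨ (b = a + 1 ∧ k + 1 ≤ a))

def Gk (n k : ℕ) : SimpleGraph ℕ where
  Adj a b := a ≠ b ∧ (GkP n k a b ∨ GkP n k b a)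
  symm := by constructor; rintro a b ⟨h, h2⟩; exact ⟨h.symm, h2.symm⟩
  loopless := by constructor; rintro a ⟨h, -⟩; exact h rfl

lemma Gk_one (n : ℕ) : Gk n 1 = pathN n := by
  ext a b
  simp only [Gk, pathN, SimpleGraph.fromRel_adj, GkP]
  constructor
  · rintro ⟨h, h2⟩; exact ⟨h, by omega⟩
  · rintro ⟨h, h2⟩; exact ⟨h, by omega⟩

lemma Gk_N (n k x : ℕ) (hk : 1 ≤ k) (hkn : k + 1 ≤ n) :
    (Gk n k).Adj (k + 1) x ↔ ((1 ≤ x ∧ x ≤ k) ∨ (x = k + 2 ∧ k + 2 ≤ n)) := by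
  simp only [Gk, GkP, SimpleGraph.Adj, true_or, or_true, and_true, true_and]
  omega

set_option maxHeartbeats 1000000 in
lemma Gk_step (n k : ℕ) (hk : 1 ≤ k) (hkn : k + 1 ≤ n) :
    lc (Gk n k) (k + 1) = Gk n (k + 1) := by
  ext a b
  simp only [lc]
  rw [Gk_N n k a hk hkn, Gk_N n k b hk hkn]
  simp only [Gk, GkP]
  omega

lemma seqLC_eq_Gk (n i : ℕ) (hi : 1 ≤ i) (hin : i ≤ n) :
    seqLC (pathN n) (List.range' 2 (i - 1)) = Gk n i := by
  induction i with
  | zero => omega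
  | succ j ih =>
    rcases Nat.eq_or_lt_of_le hi with h1 | h1
    · simp [seqLC, ← h1, Gk_one]
    · have hj : 1 ≤ j := by omega
      have : j + 1 - 1 = (j - 1) + 1 := by omega
      rw [this, List.range'_concat]
      have h2 : 2 + 1 * (j - 1) = j + 1 := by omega
      rw [h2]
      simp only [seqLC, List.foldl_append, List.foldl_cons, List.foldl_nil]
      have h3 := ih hj (by omega)
      simp only [seqLC] at h3
      rw [h3, Gk_step n j hj (by omega)]

theorem seqLC_path_neighborSet (n i : ℕ) (hi : 1 ≤ i) (hin : i + 1 ≤ n) :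
    (seqLC (pathN n) (List.range' 2 (i - 1))).neighborSet (i + 1) =
      {w : ℕ | (1 ≤ w ∧ w ≤ i) ∨ (w = i + 2 ∧ i + 2 ≤ n)} := by
  rw [seqLC_eq_Gk n i hi (by omega)]
  ext w
  simp only [SimpleGraph.mem_neighborSet, Set.mem_setOf_eq, Gk, GkP,
    true_or, or_true, and_true, true_and]
  omega
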